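/- In every connected graph G, for every power dominating set S, |S| ≥ |V(G)| / (pt_pd(G;S)·Δ(G) + 1), where Δ(G) is the maximum degree. -/
import Mathlib


open SimpleGraph Set

variable {V : Type*} {W : Type*}

/-- The closed neighborhood of a set `S`. -/
def closedNbhdSet (G : SimpleGraph V) (S : Set V) : Set V :=
  S ∪ {w | ∃ u ∈ S, G.Adj u w}

/-- One round of the zero forcing propagation step. -/
def pdStep (G : SimpleGraph V) (A : Set V) : Set V :=
  A ∪ {w | ∃ u ∈ A, G.neighborSet u \ A = {w}}

/-- `obs G S k` is the set `P^[k](S)` of vertices observed after round `k`. -/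
def obs (G : SimpleGraph V) (S : Set V) : ℕ → Set V
  | 0 => S
  | 1 => closedNbhdSet G S
  | (n + 2) => pdStep G (obs G S (n + 1))

/-- `S` is a power dominating set. -/
def IsPDS (G : SimpleGraph V) (S : Set V) : Prop :=
  ∃ t, obs G S t = Set.univ

/-- The power propagation time `pt_pd(G;S)`: least positive `t` with `P^[t](S) = V(G)`. -/
noncomputable def ptpd (G : SimpleGraph V) (S : Set V) : ℕ :=
  sInf {t | 1 ≤ t ∧ obs G S t = Set.univ}

/-- `S` is a dominating set. -/
def IsDomSet (G : SimpleGraph V) (S : Set V) : Prop :=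
  closedNbhdSet G S = Set.univ

/-- The domination number `γ(G)`. -/
noncomputable def gamma (G : SimpleGraph V) : ℕ :=
  sInf {k | ∃ S : Set V, IsDomSet G S ∧ S.ncard = k}

/-- The power domination number `γ_P(G)`. -/
noncomputable def gammaP (G : SimpleGraph V) : ℕ :=
  sInf {k | ∃ S : Set V, IsPDS G S ∧ S.ncard = k}

/-- The product power throttling number `th_pd^×(G)`. -/
noncomputable def thpd (G : SimpleGraph V) : ℕ :=
  sInf {m | ∃ S : Set V, IsPDS G S ∧ m = S.ncard * ptpd G S}

/-- The power propagation time of `G`: minimum over minimum power dominating sets. -/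
noncomputable def ptG (G : SimpleGraph V) : ℕ :=
  sInf {t | ∃ S : Set V, IsPDS G S ∧ S.ncard = gammaP G ∧ t = ptpd G S}

/-- `newObs G S k` is `P^(k)(S)`, the set of vertices first observed in round `k`. -/
def newObs (G : SimpleGraph V) (S : Set V) : ℕ → Set V
  | 0 => S
  | (k + 1) => obs G S (k + 1) \ obs G S k

/-- `rd G S v` is the round in which `v` is first observed. -/
noncomputable def rd (G : SimpleGraph V) (S : Set V) (v : V) : ℕ :=
  sInf {k | v ∈ obs G S k}

section Aux

variable (G : SimpleGraph V) (S : Set V)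

lemma obs_succ_subset : ∀ k, obs G S k ⊆ obs G S (k + 1)
  | 0 => Set.subset_union_left
  | (k + 1) => Set.subset_union_left

lemma obs_mono {k l : ℕ} (h : k ≤ l) : obs G S k ⊆ obs G S l :=
  monotone_nat_of_le_succ (obs_succ_subset G S) h

lemma ptpd_spec (hS : IsPDS G S) :
    1 ≤ ptpd G S ∧ obs G S (ptpd G S) = Set.univ := by
  obtain ⟨t, ht⟩ := hS
  have hmem : (max t 1) ∈ {t | 1 ≤ t ∧ obs G S t = Set.univ} := by
    refine ⟨le_max_right _ _, ?_⟩
    exact Set.eq_univ_of_univ_subset (ht ▸ obs_mono G S (le_max_left t 1))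
  exact Nat.sInf_mem ⟨_, hmem⟩

variable (hS : IsPDS G S)
include hS

lemma mem_obs_rd (v : V) : v ∈ obs G S (rd G S v) := by
  obtain ⟨t, ht⟩ := hS
  have hmem : t ∈ {k | v ∈ obs G S k} := by
    simp only [Set.mem_setOf_eq, ht]; trivial
  exact Nat.sInf_mem ⟨t, hmem⟩

lemma rd_le_ptpd (v : V) : rd G S v ≤ ptpd G S :=
  Nat.sInf_le (show v ∈ obs G S (ptpd G S) by rw [(ptpd_spec G S hS).2]; trivial)

omit hS in
lemma notMem_obs_of_lt_rd {v : V} {k : ℕ} (h : k < rd G S v) : v ∉ obs G S k :=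
  fun hv => (Nat.sInf_le hv).not_gt h

lemma mem_S_of_rd_eq_zero {v : V} (h : rd G S v = 0) : v ∈ S := by
  have := mem_obs_rd G S hS v
  rwa [h] at this

lemma forcer_exists {v : V} (h2 : 2 ≤ rd G S v) :
    ∃ u, u ∈ obs G S (rd G S v - 1) ∧
      G.neighborSet u \ obs G S (rd G S v - 1) = {v} ∧ 2 ≤ rd G S v := by
  obtain ⟨k, hk⟩ : ∃ k, rd G S v = k + 2 := ⟨rd G S v - 2, by omega⟩
  have hv := mem_obs_rd G S hS v
  rw [hk] at hv
  have hnot : v ∉ obs G S (k + 1) := notMem_obs_of_lt_rd G S (by omega)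
  have hstep : obs G S (k + 2) = pdStep G (obs G S (k + 1)) := rfl
  rw [hstep] at hv
  rcases hv with h | h
  · exact absurd h hnot
  · obtain ⟨u, hu, huv⟩ := h
    have he : rd G S v - 1 = k + 1 := by omega
    rw [he]
    exact ⟨u, hu, huv, h2⟩

end Aux

open Classical in
/-- A choice of forcer of `v` (meaningful when `2 ≤ rd G S v`). -/
noncomputable def forcer (G : SimpleGraph V) (S : Set V) (v : V) : V :=
  if h : ∃ u, u ∈ obs G S (rd G S v - 1) ∧
      G.neighborSet u \ obs G S (rd G S v - 1) = {v} ∧ 2 ≤ rd G S v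
  then h.choose else v

section Forcer

variable (G : SimpleGraph V) (S : Set V) (hS : IsPDS G S)
include hS

lemma forcer_spec {v : V} (h2 : 2 ≤ rd G S v) :
    forcer G S v ∈ obs G S (rd G S v - 1) ∧
      G.neighborSet (forcer G S v) \ obs G S (rd G S v - 1) = {v} := by
  have h := forcer_exists G S hS h2
  unfold forcer
  rw [dif_pos h]
  exact ⟨h.choose_spec.1, h.choose_spec.2.1⟩

omit hS in
lemma forcer_eq_self {v : V} (h2 : ¬ 2 ≤ rd G S v) : forcer G S v = v := by
  unfold forcer
  rw [dif_neg]
  rintro ⟨u, -, -, h⟩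
  exact h2 h

lemma rd_forcer_le {v : V} (h2 : 2 ≤ rd G S v) :
    rd G S (forcer G S v) ≤ rd G S v - 1 :=
  Nat.sInf_le (forcer_spec G S hS h2).1

lemma forcer_notMem_S {v : V} (h2 : 2 ≤ rd G S v) : forcer G S v ∉ S := by
  intro hfS
  obtain ⟨-, hspec⟩ := forcer_spec G S hS h2
  have hsub : G.neighborSet (forcer G S v) ⊆ obs G S (rd G S v - 1) := by
    intro w hw
    refine obs_mono G S (show 1 ≤ rd G S v - 1 by omega) ?_
    exact Or.inr ⟨_, hfS, hw⟩
  have hv : v ∈ G.neighborSet (forcer G S v) \ obs G S (rd G S v - 1) := by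
    rw [hspec]; rfl
  exact hv.2 (hsub hv.1)

lemma forcer_inj {v₁ v₂ : V} (h1 : 2 ≤ rd G S v₁) (h2 : 2 ≤ rd G S v₂)
    (h : forcer G S v₁ = forcer G S v₂) : v₁ = v₂ := by
  obtain ⟨-, s1⟩ := forcer_spec G S hS h1
  obtain ⟨-, s2⟩ := forcer_spec G S hS h2
  rw [h] at s1
  rcases le_total (rd G S v₁) (rd G S v₂) with hle | hle
  · have hsub : G.neighborSet (forcer G S v₂) \ obs G S (rd G S v₂ - 1) ⊆
        G.neighborSet (forcer G S v₂) \ obs G S (rd G S v₁ - 1) := by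
      intro x hx
      exact ⟨hx.1, fun hm => hx.2 (obs_mono G S (by omega) hm)⟩
    rw [s1, s2] at hsub
    exact (Set.singleton_subset_singleton.mp hsub).symm
  · have hsub : G.neighborSet (forcer G S v₂) \ obs G S (rd G S v₁ - 1) ⊆
        G.neighborSet (forcer G S v₂) \ obs G S (rd G S v₂ - 1) := by
      intro x hx
      exact ⟨hx.1, fun hm => hx.2 (obs_mono G S (by omega) hm)⟩
    rw [s1, s2] at hsub
    exact Set.singleton_subset_singleton.mp hsub

lemma rd_iter_le : ∀ (k : ℕ) (v : V),
    rd G S ((forcer G S)^[k] v) ≤ max 1 (rd G S v - k) := by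
  intro k
  induction k with
  | zero => intro v; simp
  | succ k ih =>
    intro v
    rw [Function.iterate_succ_apply]
    refine (ih (forcer G S v)).trans ?_
    by_cases h2 : 2 ≤ rd G S v
    · have := rd_forcer_le G S hS h2
      have : rd G S (forcer G S v) - k ≤ rd G S v - (k + 1) := by omega
      omega
    · rw [forcer_eq_self G S h2]
      omega

end Forcer

/-- Number of steps along the forcing chain from `v` back to its root. -/
noncomputable def mdist (G : SimpleGraph V) (S : Set V) (v : V) : ℕ :=
  sInf {j | rd G S ((forcer G S)^[j] v) < 2}

section Mdist

variable (G : SimpleGraph V) (S : Set V) (hS : IsPDS G S)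
include hS

lemma mdist_mem_set (v : V) : rd G S ((forcer G S)^[mdist G S v] v) < 2 := by
  have hne : rd G S ((forcer G S)^[rd G S v] v) < 2 := by
    have := rd_iter_le G S hS (rd G S v) v
    omega
  have := Nat.sInf_mem (⟨_, hne⟩ : {j | rd G S ((forcer G S)^[j] v) < 2}.Nonempty)
  exact this

omit hS in
lemma mdist_min {v : V} {j : ℕ} (h : j < mdist G S v) :
    2 ≤ rd G S ((forcer G S)^[j] v) := by
  by_contra hc
  have hj : j ∈ {j | rd G S ((forcer G S)^[j] v) < 2} := by
    simp only [Set.mem_setOf_eq]; omega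
  have hle : mdist G S v ≤ j := Nat.sInf_le hj
  omega

lemma mdist_le {v : V} (h : 1 ≤ rd G S v) : mdist G S v ≤ rd G S v - 1 := by
  have h1 := rd_iter_le G S hS (rd G S v - 1) v
  have hj : (rd G S v - 1) ∈ {j | rd G S ((forcer G S)^[j] v) < 2} := by
    simp only [Set.mem_setOf_eq]; omega
  exact Nat.sInf_le hj

lemma mdist_pos {v : V} (h2 : 2 ≤ rd G S v) : 1 ≤ mdist G S v := by
  by_contra h
  have h0 : mdist G S v = 0 := by omega
  have hm := mdist_mem_set G S hS v
  rw [h0] at hm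
  simp only [Function.iterate_zero, id_eq] at hm
  omega

end Mdist

section Chain

variable (G : SimpleGraph V) (S : Set V) (hS : IsPDS G S)

lemma iterate_stab : ∀ (i : ℕ) {v : V}, rd G S v < 2 → (forcer G S)^[i] v = v := by
  intro i
  induction i with
  | zero => intro v _; rfl
  | succ i ih =>
    intro v hv
    rw [Function.iterate_succ_apply, forcer_eq_self G S (by omega)]
    exact ih hv

include hS

lemma mdist_forcer {v : V} (h2 : 2 ≤ rd G S v) :
    mdist G S (forcer G S v) = mdist G S v - 1 := by
  have hpos := mdist_pos G S hS h2
  have hle : mdist G S (forcer G S v) ≤ mdist G S v - 1 := by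
    refine Nat.sInf_le ?_
    have : (forcer G S)^[mdist G S v - 1] (forcer G S v) = (forcer G S)^[mdist G S v] v := by
      rw [← Function.iterate_succ_apply]
      congr 1
      omega
    simp only [Set.mem_setOf_eq, this]
    exact mdist_mem_set G S hS v
  have hge : mdist G S v - 1 ≤ mdist G S (forcer G S v) := by
    by_contra hc
    have h3 := mdist_mem_set G S hS (forcer G S v)
    have he : (forcer G S)^[mdist G S (forcer G S v)] (forcer G S v)
        = (forcer G S)^[mdist G S (forcer G S v) + 1] v := by
      rw [Function.iterate_succ_apply]
    rw [he] at h3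
    have := mdist_min G S (show mdist G S (forcer G S v) + 1 < mdist G S v by omega) (v := v)
    omega
  omega

lemma root_forcer {v : V} (h2 : 2 ≤ rd G S v) :
    (forcer G S)^[mdist G S (forcer G S v)] (forcer G S v)
      = (forcer G S)^[mdist G S v] v := by
  rw [mdist_forcer G S hS h2, ← Function.iterate_succ_apply]
  congr 1
  have := mdist_pos G S hS h2
  omega

lemma chain_inj : ∀ (m : ℕ) {v₁ v₂ : V}, 2 ≤ rd G S v₁ → 2 ≤ rd G S v₂ →
    mdist G S v₁ = m → mdist G S v₂ = m →
    (forcer G S)^[mdist G S v₁] v₁ = (forcer G S)^[mdist G S v₂] v₂ → v₁ = v₂ := by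
  intro m
  induction m with
  | zero =>
    intro v₁ v₂ h1 h2 hm1 _ _
    exact absurd hm1 (by have := mdist_pos G S hS h1; omega)
  | succ k ih =>
    intro v₁ v₂ h1 h2 hm1 hm2 hR
    by_cases hk : k = 0
    · subst hk
      have h1' : mdist G S v₁ = 1 := by omega
      have h2' : mdist G S v₂ = 1 := by omega
      rw [h1', h2', Function.iterate_one] at hR
      exact forcer_inj G S hS h1 h2 hR
    · have hf1 : 2 ≤ rd G S (forcer G S v₁) := by
        have := mdist_min G S (v := v₁) (j := 1) (by omega)
        rwa [Function.iterate_one] at this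
      have hf2 : 2 ≤ rd G S (forcer G S v₂) := by
        have := mdist_min G S (v := v₂) (j := 1) (by omega)
        rwa [Function.iterate_one] at this
      have hmf1 : mdist G S (forcer G S v₁) = k := by
        rw [mdist_forcer G S hS h1, hm1]; omega
      have hmf2 : mdist G S (forcer G S v₂) = k := by
        rw [mdist_forcer G S hS h2, hm2]; omega
      have hRf : (forcer G S)^[mdist G S (forcer G S v₁)] (forcer G S v₁)
          = (forcer G S)^[mdist G S (forcer G S v₂)] (forcer G S v₂) := by
        rw [root_forcer G S hS h1, root_forcer G S hS h2]
        exact hR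
      exact forcer_inj G S hS h1 h2 (ih hf1 hf2 hmf1 hmf2 hRf)

lemma root_mem {v : V} (h2 : 2 ≤ rd G S v) :
    (forcer G S)^[mdist G S v] v ∈ obs G S 1 ∧ (forcer G S)^[mdist G S v] v ∉ S := by
  have hpos := mdist_pos G S hS h2
  have hw : 2 ≤ rd G S ((forcer G S)^[mdist G S v - 1] v) :=
    mdist_min G S (by omega)
  have hroot : (forcer G S)^[mdist G S v] v
      = forcer G S ((forcer G S)^[mdist G S v - 1] v) := by
    have hm : mdist G S v - 1 + 1 = mdist G S v := by omega
    calc (forcer G S)^[mdist G S v] v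
        = (forcer G S)^[mdist G S v - 1 + 1] v := by rw [hm]
      _ = forcer G S ((forcer G S)^[mdist G S v - 1] v) :=
          Function.iterate_succ_apply' _ _ _
  have hnotS : (forcer G S)^[mdist G S v] v ∉ S := by
    rw [hroot]
    exact forcer_notMem_S G S hS hw
  refine ⟨?_, hnotS⟩
  have hlt := mdist_mem_set G S hS v
  have hne : rd G S ((forcer G S)^[mdist G S v] v) ≠ 0 := by
    intro h0
    exact hnotS (mem_S_of_rd_eq_zero G S hS h0)
  have h1 : rd G S ((forcer G S)^[mdist G S v] v) = 1 := by omega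
  have := mem_obs_rd G S hS ((forcer G S)^[mdist G S v] v)
  rwa [h1] at this

end Chain

theorem stmt3 [Fintype V] (G : SimpleGraph V) [DecidableRel G.Adj] (hG : G.Connected)
    (S : Set V) (hS : IsPDS G S) :
    (Fintype.card V : ℝ) / (ptpd G S * G.maxDegree + 1) ≤ (S.ncard : ℝ) := by
  classical
  obtain ⟨hT1, hTu⟩ := ptpd_spec G S hS
  set T := ptpd G S with hTdef
  set Δ := G.maxDegree with hΔdef
  set SF : Finset V := S.toFinset with hSF
  set A : Finset V := Finset.univ.filter (fun v => rd G S v = 1) with hAdef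
  set D : Finset V := Finset.univ.filter (fun v => 2 ≤ rd G S v) with hDdef
  have hrd0 : ∀ v : V, v ∈ S → rd G S v = 0 := by
    intro v hv
    have : rd G S v ≤ 0 := Nat.sInf_le (show v ∈ obs G S 0 from hv)
    omega
  have hcover : ∀ v : V, v ∈ SF ∪ A ∪ D := by
    intro v
    simp only [Finset.mem_union, Finset.mem_filter, Finset.mem_univ, true_and,
      Set.mem_toFinset, hSF, hAdef, hDdef]
    rcases Nat.lt_or_ge (rd G S v) 2 with h | h
    · rcases Nat.eq_zero_or_pos (rd G S v) with h0 | h0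
      · exact Or.inl (Or.inl (mem_S_of_rd_eq_zero G S hS h0))
      · exact Or.inl (Or.inr (by omega))
    · exact Or.inr h
  have hcard : Fintype.card V ≤ SF.card + A.card + D.card := by
    have h1 : (Finset.univ : Finset V).card ≤ (SF ∪ A ∪ D).card :=
      Finset.card_le_card (fun v _ => hcover v)
    have h2 := Finset.card_union_le (SF ∪ A) D
    have h3 := Finset.card_union_le SF A
    have h4 : Fintype.card V = (Finset.univ : Finset V).card := rfl
    omega
  have hA : A.card ≤ Δ * SF.card := by
    have hsub : A ⊆ SF.biUnion (fun s => G.neighborFinset s) := by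
      intro v hv
      rw [hAdef, Finset.mem_filter] at hv
      have hv1 : v ∈ obs G S 1 := by
        have := mem_obs_rd G S hS v; rwa [hv.2] at this
      have hvS : v ∉ S := fun hm => by have := hrd0 v hm; omega
      rcases hv1 with h | h
      · exact absurd h hvS
      · obtain ⟨u, hu, hadj⟩ := h
        exact Finset.mem_biUnion.mpr
          ⟨u, Set.mem_toFinset.mpr hu, (G.mem_neighborFinset _ _).mpr hadj⟩
    calc A.card ≤ (SF.biUnion (fun s => G.neighborFinset s)).card :=
          Finset.card_le_card hsub
      _ ≤ ∑ s ∈ SF, (G.neighborFinset s).card := Finset.card_biUnion_le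
      _ ≤ ∑ s ∈ SF, Δ := Finset.sum_le_sum (fun s _ => G.degree_le_maxDegree s)
      _ = Δ * SF.card := by rw [Finset.sum_const, smul_eq_mul, mul_comm]
  have hD : D.card ≤ A.card * (T - 1) := by
    have hmaps : ∀ v ∈ D, ((forcer G S)^[mdist G S v] v, mdist G S v)
        ∈ A ×ˢ Finset.Icc 1 (T - 1) := by
      intro v hv
      rw [hDdef, Finset.mem_filter] at hv
      obtain ⟨-, h2⟩ := hv
      obtain ⟨hr1, hrS⟩ := root_mem G S hS h2
      have hrdroot : rd G S ((forcer G S)^[mdist G S v] v) = 1 := by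
        have hle : rd G S ((forcer G S)^[mdist G S v] v) ≤ 1 := Nat.sInf_le hr1
        have hne : rd G S ((forcer G S)^[mdist G S v] v) ≠ 0 :=
          fun h0 => hrS (mem_S_of_rd_eq_zero G S hS h0)
        omega
      rw [Finset.mem_product]
      constructor
      · rw [hAdef, Finset.mem_filter]
        exact ⟨Finset.mem_univ _, hrdroot⟩
      · rw [Finset.mem_Icc]
        have hp := mdist_pos G S hS h2
        have hle := mdist_le G S hS (show 1 ≤ rd G S v by omega)
        have hrt := rd_le_ptpd G S hS v
        omega
    have hinj : Set.InjOn (fun v => ((forcer G S)^[mdist G S v] v, mdist G S v))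
        (D : Set V) := by
      intro v₁ hv₁ v₂ hv₂ heq
      rw [Finset.coe_filter] at hv₁ hv₂
      simp only [Set.mem_setOf_eq] at hv₁ hv₂
      have hm : mdist G S v₁ = mdist G S v₂ := congrArg Prod.snd heq
      have hr : (forcer G S)^[mdist G S v₁] v₁ = (forcer G S)^[mdist G S v₂] v₂ :=
        congrArg Prod.fst heq
      exact chain_inj G S hS (mdist G S v₂) hv₁.2 hv₂.2 hm rfl hr
    calc D.card ≤ (A ×ˢ Finset.Icc 1 (T - 1)).card :=
          Finset.card_le_card_of_injOn _ hmaps hinj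
      _ = A.card * (T - 1) := by rw [Finset.card_product, Nat.card_Icc]; simp
  have hSFcard : SF.card = S.ncard := (Set.ncard_eq_toFinset_card' S).symm
  obtain ⟨T', hT'⟩ : ∃ T', T = T' + 1 := ⟨T - 1, by omega⟩
  have key : Fintype.card V ≤ S.ncard * (T * Δ + 1) := by
    rw [hSFcard] at hcard hA
    have h1 : D.card ≤ Δ * S.ncard * T' := by
      have hD' := hD
      rw [hT'] at hD'
      simp only [Nat.add_sub_cancel] at hD'
      calc D.card ≤ A.card * T' := hD'
        _ ≤ Δ * S.ncard * T' := Nat.mul_le_mul_right _ hA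
    have h3 : Fintype.card V ≤ S.ncard + Δ * S.ncard + Δ * S.ncard * T' := by omega
    calc Fintype.card V ≤ S.ncard + Δ * S.ncard + Δ * S.ncard * T' := h3
      _ = S.ncard * ((T' + 1) * Δ + 1) := by ring
      _ = S.ncard * (T * Δ + 1) := by rw [hT']
  rw [div_le_iff₀ (by positivity)]
  exact_mod_cast key
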